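/- Define N^v(r) = 16r, N^r(r) = −(3/2)r + M, h = −1/2, and D(r) = (1 − M/r)², for M ≤ r ≤ 9M/8. Then the quadratic form K(a, b, c) = G_{vv} a² + G_{rr} b² + G_∇ c² + G_{vr} a b, with G_{vv} = ∂_r N^v = 16, G_{rr} = D[(∂_r N^r)/2 − N^r/r] − N^r D'/2 + hD, G_∇ = −(∂_r N^r)/2 + h = 1/4, G_{vr} = D ∂_r N^v − 2N^r/r + 2h = 16D + 2√D, is non-negative definite for every r ∈ [M, 9M/8]; moreover K(a,b,c) ≥ C (a² + √(D(r)) b² + c²) for a constant C > 0 depending only on M. -/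

import Mathlib

/-- Positivity of the modified redshift current K^{N,−1/2} near the degenerate
horizon (Proposition 9.1): with N^v = 16r, N^r = −(3/2)r + M, h = −1/2, the
quadratic form K is non-negative definite on M ≤ r ≤ 9M/8 and controls
a² + √D b² + c². -/

private lemma key_ineq (s a b c : ℝ) (hs0 : 0 ≤ s) (hs1 : s ≤ 1/9) :
    1/100 * (a ^ 2 + s * b ^ 2 + c ^ 2) ≤
      16 * a ^ 2 + (s * (2 - s) / 4) * b ^ 2 + (1/4) * c ^ 2 + (16 * s ^ 2 + 2 * s) * (a * b) := by
  rcases le_or_gt 0 (a * b) with hab | hab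
  · have h0 : 0 ≤ (16 * s ^ 2 + 2 * s) * (a * b) :=
      mul_nonneg (by nlinarith) hab
    nlinarith [sq_nonneg a, sq_nonneg c, mul_nonneg hs0 (sq_nonneg b),
      mul_nonneg (mul_nonneg hs0 hs0) (sq_nonneg b)]
  · nlinarith [mul_nonneg hs0 (sq_nonneg (10*a - 3*b)), mul_nonneg hs0 (sq_nonneg (10*a + 3*b)),
      mul_nonneg (mul_nonneg hs0 hs0) (sq_nonneg (8*a - b)),
      mul_nonneg (mul_nonneg hs0 hs0) (sq_nonneg (8*a + b)),
      sq_nonneg a, sq_nonneg c, mul_nonneg hs0 (sq_nonneg b),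
      mul_nonneg (mul_nonneg hs0 hs0) (sq_nonneg a),
      mul_nonneg (mul_nonneg hs0 hs0) (sq_nonneg b)]

set_option maxHeartbeats 1600000 in
theorem modified_redshift_positivity (M : ℝ) (hM : 0 < M)
    (D Nv Nr Gvv Grr Ggrad Gvr : ℝ → ℝ) (h : ℝ)
    (hD : ∀ r, D r = (1 - M / r) ^ 2)
    (hNv : ∀ r, Nv r = 16 * r) (hNr : ∀ r, Nr r = -(3 / 2) * r + M) (hh : h = -(1 / 2))
    (hGvv : ∀ r, Gvv r = deriv Nv r)
    (hGrr : ∀ r, Grr r = D r * (deriv Nr r / 2 - Nr r / r) - Nr r * deriv D r / 2 + h * D r)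
    (hGgrad : ∀ r, Ggrad r = -(deriv Nr r) / 2 + h)
    (hGvr : ∀ r, Gvr r = D r * deriv Nv r - 2 * Nr r / r + 2 * h) :
    ∃ C > (0:ℝ), ∀ r ∈ Set.Icc M (9 * M / 8), ∀ a b c : ℝ,
      0 ≤ Gvv r * a ^ 2 + Grr r * b ^ 2 + Ggrad r * c ^ 2 + Gvr r * (a * b) ∧
      C * (a ^ 2 + Real.sqrt (D r) * b ^ 2 + c ^ 2) ≤
        Gvv r * a ^ 2 + Grr r * b ^ 2 + Ggrad r * c ^ 2 + Gvr r * (a * b) := by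
  have hNvf : Nv = fun x : ℝ => 16 * x := funext hNv
  have hNrf : Nr = fun x : ℝ => -(3 / 2) * x + M := funext hNr
  have hDf : D = fun x : ℝ => (1 - M / x) ^ 2 := funext hD
  refine ⟨1/100, by norm_num, ?_⟩
  rintro r ⟨hr1, hr2⟩ a b c
  have hr0 : 0 < r := lt_of_lt_of_le hM hr1
  have hrne : r ≠ 0 := hr0.ne'
  -- t = M/r ∈ [8/9, 1]
  obtain ⟨t, ht⟩ : ∃ t : ℝ, t = M / r := ⟨_, rfl⟩
  have ht1 : t ≤ 1 := by rw [ht, div_le_one hr0]; exact hr1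
  have ht0 : 8/9 ≤ t := by
    rw [ht, le_div_iff₀ hr0]; nlinarith
  obtain ⟨s, hs⟩ : ∃ s : ℝ, s = 1 - t := ⟨_, rfl⟩
  have hs0 : 0 ≤ s := by simp [hs]; linarith
  have hs1 : s ≤ 1/9 := by simp [hs]; linarith
  -- derivatives
  have hdNv : deriv Nv r = 16 := by
    rw [hNvf]
    have : HasDerivAt (fun x : ℝ => 16 * x) (16 * 1) r := (hasDerivAt_id r).const_mul 16
    simpa using this.deriv
  have hdNr : deriv Nr r = -(3/2) := by
    rw [hNrf]
    have : HasDerivAt (fun x : ℝ => -(3 / 2) * x + M) (-(3/2) * 1) r :=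
      ((hasDerivAt_id r).const_mul (-(3/2))).add_const M
    simpa using this.deriv
  have hdD : deriv D r = 2 * (1 - M / r) * (M / r ^ 2) := by
    rw [hDf]
    have h1 : HasDerivAt (fun x : ℝ => M / x) (M * (-(r ^ 2)⁻¹)) r := by
      simpa [div_eq_mul_inv] using (hasDerivAt_inv hrne).const_mul M
    have h2 : HasDerivAt (fun x : ℝ => 1 - M / x) (-(M * (-(r ^ 2)⁻¹))) r := h1.const_sub 1
    have h3 : HasDerivAt (fun x : ℝ => (1 - M / x) ^ 2) _ r := h2.pow 2
    rw [h3.deriv]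
    field_simp
    norm_num
    field_simp
  -- explicit forms
  have hMr : M = r * t := by rw [ht]; field_simp
  have hGvv' : Gvv r = 16 := by rw [hGvv, hdNv]
  have hGgrad' : Ggrad r = 1/4 := by rw [hGgrad, hdNr, hh]; norm_num
  have hGrr' : Grr r = (1 - t) * (1 + t) / 4 := by
    rw [hGrr, hdNr, hdD, hD, hNr, hh, hMr]
    field_simp
    ring
  have hGvr' : Gvr r = 16 * (1 - t) ^ 2 + 2 * (1 - t) := by
    rw [hGvr, hdNv, hD, hNr, hh, hMr]
    field_simp
    ring
  have hsqrt : Real.sqrt (D r) = 1 - t := by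
    rw [hD, ht]
    exact Real.sqrt_sq (by linarith)
  have hst : (1 : ℝ) - t = s := by rw [hs]
  have key : 1/100 * (a ^ 2 + s * b ^ 2 + c ^ 2) ≤
      16 * a ^ 2 + (s * (2 - s) / 4) * b ^ 2 + (1/4) * c ^ 2 + (16 * s ^ 2 + 2 * s) * (a * b) :=
    key_ineq s a b c hs0 hs1
  have hGrr'' : Grr r = s * (2 - s) / 4 := by rw [hGrr', hs]; ring
  have hGvr'' : Gvr r = 16 * s ^ 2 + 2 * s := by rw [hGvr', hst]
  rw [hGvv', hGgrad', hGrr'', hGvr'', hsqrt, hst]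
  constructor
  · refine le_trans ?_ key
    positivity
  · exact key
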